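/- arXiv:2605.09451 — 10 statements merged into one kernel-verified Lean document; each statement's English description precedes it below -/
import Mathlib

section
/- Let k, n be positive integers greater than 1 and suppose both n and k are even. Then there exist matrices A, B in M_n(ℂ) such that (AB - BA)^k is the identity matrix. (In particular, the diagonal matrix C = diag(1, -1, 1, -1, ..., 1, -1) has trace zero and satisfies C^k = Id_n.) -/
lemma comm_diag (n : ℕ) (hne : Even n) :
    ∃ A B : Matrix (Fin n) (Fin n) ℂ,
      A * B - B * A = Matrix.diagonal (fun i : Fin n => ((-1 : ℂ)) ^ (i : ℕ)) := by
  set A : Matrix (Fin n) (Fin n) ℂ :=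
    Matrix.of fun i j => if (j : ℕ) = (i : ℕ) + 1 ∧ Even (i : ℕ) then 1 else 0 with hA
  set B : Matrix (Fin n) (Fin n) ℂ :=
    Matrix.of fun i j => if (i : ℕ) = (j : ℕ) + 1 ∧ Even (j : ℕ) then 1 else 0 with hB
  refine ⟨A, B, ?_⟩
  ext i j
  have hAB : (A * B) i j = if i = j ∧ Even (i : ℕ) then 1 else 0 := by
    rw [Matrix.mul_apply]
    by_cases h : i = j ∧ Even (i : ℕ)
    · obtain ⟨rfl, he⟩ := h
      have hi1 : (i : ℕ) + 1 < n := by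
        rcases lt_or_eq_of_le (Nat.succ_le_of_lt i.isLt) with h | h
        · exact h
        · exfalso; rw [← h] at hne; simp [Nat.even_add_one, he] at hne
      rw [Finset.sum_eq_single (⟨(i:ℕ)+1, hi1⟩ : Fin n)]
      · simp [hA, hB, he]
      · intro l _ hl
        have : ¬ ((l : ℕ) = (i : ℕ) + 1) := fun hc => hl (Fin.ext hc)
        simp [hA, hB, this, he]
      · simp
    · rw [if_neg h]
      apply Finset.sum_eq_zero
      intro l _
      by_cases h1 : (l : ℕ) = (i : ℕ) + 1 ∧ Even (i : ℕ)
      · by_cases h2 : (l : ℕ) = (j : ℕ) + 1 ∧ Even (j : ℕ)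
        · exact absurd ⟨Fin.ext (Nat.succ_injective (h1.1.symm.trans h2.1)), h1.2⟩ h
        · simp [hA, hB, h2]
      · simp [hA, hB, h1]
  have hBA : (B * A) i j = if i = j ∧ ¬ Even (i : ℕ) then 1 else 0 := by
    rw [Matrix.mul_apply]
    by_cases h : i = j ∧ ¬ Even (i : ℕ)
    · obtain ⟨rfl, he⟩ := h
      have hi0 : 0 < (i : ℕ) := by
        rcases Nat.eq_zero_or_pos (i : ℕ) with h0 | h0
        · exact absurd (h0 ▸ Even.zero) he
        · exact h0
      have hlt : (i : ℕ) - 1 < n := lt_of_le_of_lt (Nat.sub_le _ _) i.isLt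
      have hsucc : (i : ℕ) = ((i : ℕ) - 1) + 1 := (Nat.succ_pred_eq_of_pos hi0).symm
      have hev : Even ((i : ℕ) - 1) := by
        obtain ⟨m, hm⟩ := Nat.not_even_iff_odd.mp he
        exact ⟨m, by omega⟩
      rw [Finset.sum_eq_single (⟨(i:ℕ)-1, hlt⟩ : Fin n)]
      · simp [hA, hB, hev, ← hsucc, Nat.not_even_iff_odd.mp he]
      · intro l _ hl
        have : ¬ ((i : ℕ) = (l : ℕ) + 1 ∧ Even (l : ℕ)) := by
          rintro ⟨hc, -⟩
          exact hl (Fin.ext (show (l : ℕ) = (i : ℕ) - 1 by omega))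
        simp [hA, hB, this]
      · simp
    · rw [if_neg h]
      apply Finset.sum_eq_zero
      intro l _
      by_cases h1 : (i : ℕ) = (l : ℕ) + 1 ∧ Even (l : ℕ)
      · by_cases h2 : (j : ℕ) = (l : ℕ) + 1 ∧ Even (l : ℕ)
        · refine absurd ⟨Fin.ext (h1.1.trans h2.1.symm), ?_⟩ h
          rw [h1.1, Nat.even_add_one]
          simpa using h1.2
        · simp [hA, hB, h2]
      · simp [hA, hB, h1]
  rw [Matrix.sub_apply, hAB, hBA, Matrix.diagonal_apply]
  by_cases hij : i = j
  · subst hij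
    rcases Nat.even_or_odd (i : ℕ) with he | ho
    · simp [he, he.neg_one_pow]
    · simp [Nat.not_even_iff_odd.mpr ho, ho.neg_one_pow]
  · simp [hij]

theorem stmt_0 (k n : ℕ) (hk : 1 < k) (hn : 1 < n) (hke : Even k) (hne : Even n) :
    (∃ A B : Matrix (Fin n) (Fin n) ℂ, (A * B - B * A) ^ k = 1) ∧
    (Matrix.trace (Matrix.diagonal (fun i : Fin n => ((-1 : ℂ)) ^ (i : ℕ))) = 0 ∧
      (Matrix.diagonal (fun i : Fin n => ((-1 : ℂ)) ^ (i : ℕ))) ^ k = 1) := by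
  have hpow : (Matrix.diagonal (fun i : Fin n => ((-1 : ℂ)) ^ (i : ℕ))) ^ k = 1 := by
    have h1 : ∀ i : Fin n, ((-1 : ℂ) ^ (i : ℕ)) ^ k = 1 := fun i => by
      rw [← pow_mul, mul_comm, pow_mul, hke.neg_one_pow, one_pow]
    ext i j
    rw [Matrix.diagonal_pow]
    simp [Matrix.diagonal_apply, Matrix.one_apply, h1]
  refine ⟨?_, ?_, hpow⟩
  · obtain ⟨A, B, hAB⟩ := comm_diag n hne
    exact ⟨A, B, by rw [hAB, hpow]⟩
  · rw [Matrix.trace_diagonal, Fin.sum_univ_eq_sum_range, neg_one_geom_sum,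
      if_pos hne]
end

section
/- Let k = p^α be a prime power and n a positive integer greater than 1. There exist matrices A, B in M_n(ℂ) with (AB - BA)^k = Id_n if and only if p divides n. -/
open Polynomial Matrix

private theorem aux_permMatrix_pow {ι : Type*} [Fintype ι] [DecidableEq ι] (σ : Equiv.Perm ι)
    (m : ℕ) : (σ.permMatrix ℂ) ^ m = (σ ^ m).permMatrix ℂ := by
  induction m with
  | zero =>
    show (1 : Matrix ι ι ℂ) = ((1 : Equiv.Perm ι).toPEquiv).toMatrix
    rw [show (1 : Equiv.Perm ι) = Equiv.refl ι from rfl, Equiv.toPEquiv_refl,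
      PEquiv.toMatrix_refl]
  | succ j ih =>
    rw [pow_succ', ih, pow_succ]
    show _ = ((σ ^ j) * σ).permMatrix ℂ
    rw [show ((σ ^ j) * σ : Equiv.Perm ι) = (σ.trans (σ ^ j) : ι ≃ ι) from rfl]
    unfold Equiv.Perm.permMatrix
    rw [Equiv.toPEquiv_trans, PEquiv.toMatrix_trans]

private theorem aux_commutator (ι : Type*) [Fintype ι] [DecidableEq ι] (C : Matrix ι ι ℂ)
    (h : ∀ i, C i i = 0) : ∃ A B : Matrix ι ι ℂ, A * B - B * A = C := by
  classical
  set d : ι → ℂ := fun i => ((Fintype.equivFin ι i : ℕ) : ℂ) with hd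
  have hdinj : Function.Injective d := by
    intro a b hab
    exact (Fintype.equivFin ι).injective (Fin.val_injective (Nat.cast_injective hab))
  refine ⟨Matrix.diagonal d, Matrix.of fun i j => if i = j then 0 else C i j / (d i - d j), ?_⟩
  ext i j
  by_cases hij : i = j
  · subst hij
    simp [Matrix.sub_apply, Matrix.diagonal_mul, Matrix.mul_diagonal, h i]
  · have hne : d i - d j ≠ 0 := sub_ne_zero.mpr (fun e => hij (hdinj e))
    simp only [Matrix.sub_apply, Matrix.diagonal_mul, Matrix.mul_diagonal, Matrix.of_apply,
      if_neg hij]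
    field_simp

private theorem aux_root_pow (N : ℕ) (M : Matrix (Fin N) (Fin N) ℂ) (k : ℕ) (hM : M ^ k = 1)
    {x : ℂ} (hx : x ∈ M.charpoly.roots) : x ^ k = 1 := by
  have hroot : M.charpoly.eval x = 0 := Polynomial.isRoot_of_mem_roots hx
  have hdet : (x • (1 : Matrix (Fin N) (Fin N) ℂ) - M).det = 0 := by
    have hmap : (charmatrix M).map (Polynomial.eval x)
        = x • (1 : Matrix (Fin N) (Fin N) ℂ) - M := by
      ext i j
      by_cases hij : i = j
      · subst hij; simp [charmatrix_apply_eq]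
      · simp [charmatrix_apply_ne _ _ _ hij, Matrix.one_apply_ne hij]
    have h := RingHom.map_det (Polynomial.evalRingHom x) (charmatrix M)
    rw [RingHom.mapMatrix_apply] at h
    rw [show ((Polynomial.evalRingHom x)) M.charmatrix.det = M.charpoly.eval x from rfl] at h
    rw [show M.charmatrix.map ⇑(Polynomial.evalRingHom x)
        = M.charmatrix.map (Polynomial.eval x) from rfl, hmap] at h
    rw [← h]; exact hroot
  obtain ⟨v, hv, hv0⟩ := Matrix.exists_mulVec_eq_zero_iff.mpr hdet
  have heig : M.mulVec v = x • v := by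
    have h1 : (x • (1 : Matrix (Fin N) (Fin N) ℂ)).mulVec v - M.mulVec v = 0 := by
      rw [← Matrix.sub_mulVec]; exact hv0
    have h2 : (x • (1 : Matrix (Fin N) (Fin N) ℂ)).mulVec v = x • v := by
      rw [Matrix.smul_mulVec, Matrix.one_mulVec]
    rw [h2, sub_eq_zero] at h1
    exact h1.symm
  have key : ∀ j : ℕ, (M ^ j).mulVec v = x ^ j • v := by
    intro j
    induction j with
    | zero => simp [Matrix.one_mulVec]
    | succ i ih =>
      rw [pow_succ, ← Matrix.mulVec_mulVec, heig, Matrix.mulVec_smul, ih, pow_succ, smul_smul,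
        mul_comm]
  have hk := key k
  rw [hM, Matrix.one_mulVec] at hk
  obtain ⟨i, hi⟩ := Function.ne_iff.mp hv
  have hvi : v i = x ^ k * v i := by
    have := congrFun hk i
    simpa using this
  have h2 : x ^ k * v i = 1 * v i := by rw [one_mul]; exact hvi.symm
  exact mul_right_cancel₀ hi h2

private theorem aux_sum_roots (p α : ℕ) (hp : p.Prime) (hα : 0 < α) (s : Multiset ℂ)
    (h1 : ∀ x ∈ s, x ^ (p ^ α) = 1) (h0 : s.sum = 0) : p ∣ Multiset.card s := by
  classical
  haveI : Fact p.Prime := ⟨hp⟩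
  set k := p ^ α with hk
  have hk0 : k ≠ 0 := pow_ne_zero _ hp.pos.ne'
  haveI : NeZero k := ⟨hk0⟩
  set ζ := Complex.exp (2 * Real.pi * Complex.I / k) with hζdef
  have hζ : IsPrimitiveRoot ζ k := Complex.isPrimitiveRoot_exp k hk0
  set g : ℂ → Polynomial ℤ := fun x =>
    if h : x ^ k = 1 then X ^ (hζ.eq_pow_of_pow_eq_one h).choose else 0 with hg
  set f : Polynomial ℤ := (s.map g).sum with hf
  have haevalg : ∀ x ∈ s, Polynomial.aeval ζ (g x) = x := by
    intro x hx
    have h : x ^ k = 1 := h1 x hx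
    rw [hg]
    simp only [dif_pos h]
    obtain ⟨_, hspec⟩ := (hζ.eq_pow_of_pow_eq_one h).choose_spec
    simpa using hspec
  have haeval : Polynomial.aeval ζ f = 0 := by
    rw [hf, map_multiset_sum, Multiset.map_map]
    simp only [Function.comp_def]
    rw [Multiset.map_congr rfl (fun x hx => haevalg x hx)]
    simpa using h0
  have heval1 : f.eval 1 = (Multiset.card s : ℤ) := by
    rw [hf]
    have : (Polynomial.evalRingHom (1 : ℤ)) ((s.map g).sum)
        = ((s.map g).map (Polynomial.eval 1)).sum := map_multiset_sum _ _
    rw [show f.eval 1 = (Polynomial.evalRingHom (1 : ℤ)) ((s.map g).sum) from rfl, this,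
      Multiset.map_map]
    have hone : ∀ x ∈ s, (Polynomial.eval 1 ∘ g) x = 1 := by
      intro x hx
      have h : x ^ k = 1 := h1 x hx
      simp [hg, dif_pos h]
    rw [Multiset.map_congr rfl hone]
    simp [Multiset.map_const']
  have hintegral : IsIntegral ℤ ζ := hζ.isIntegral (Nat.pos_of_ne_zero hk0)
  have hdvd : minpoly ℤ ζ ∣ f := minpoly.isIntegrallyClosed_dvd hintegral haeval
  rw [← Polynomial.cyclotomic_eq_minpoly hζ (Nat.pos_of_ne_zero hk0)] at hdvd
  obtain ⟨q, hq⟩ := hdvd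
  have hcard : (Multiset.card s : ℤ) = (p : ℤ) * q.eval 1 := by
    rw [← heval1, hq, Polynomial.eval_mul]
    congr 1
    have : k = p ^ ((α - 1) + 1) := by rw [hk]; congr 1; omega
    rw [this, Polynomial.eval_one_cyclotomic_prime_pow]
  have hpd : (p : ℤ) ∣ (Multiset.card s : ℤ) := ⟨q.eval 1, hcard⟩
  exact_mod_cast hpd

theorem stmt_3 (p α : ℕ) (hp : Nat.Prime p) (hα : 0 < α) (k : ℕ) (hk : k = p ^ α)
    (n : ℕ) (hn : 1 < n) :
    (∃ A B : Matrix (Fin n) (Fin n) ℂ, (A * B - B * A) ^ k = 1) ↔ p ∣ n := by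
  constructor
  · rintro ⟨A, B, hAB⟩
    set M : Matrix (Fin n) (Fin n) ℂ := A * B - B * A with hM
    have htr : M.trace = 0 := by
      rw [hM, Matrix.trace_sub, Matrix.trace_mul_comm A B, sub_self]
    have hsum : M.charpoly.roots.sum = 0 := by
      rw [← Matrix.trace_eq_sum_roots_charpoly, htr]
    have hcard : Multiset.card M.charpoly.roots = n := by
      have hsplit : M.charpoly.Splits := IsAlgClosed.splits _
      rw [Polynomial.splits_iff_card_roots.mp hsplit, Matrix.charpoly_natDegree_eq_dim,
        Fintype.card_fin]
    have := aux_sum_roots p α hp hα M.charpoly.roots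
      (fun x hx => by rw [← hk]; exact aux_root_pow n M k hAB hx) hsum
    rwa [hcard] at this
  · rintro ⟨m, hm⟩
    haveI : NeZero p := ⟨hp.pos.ne'⟩
    have hm0 : 0 < m := by
      rcases Nat.eq_zero_or_pos m with h | h
      · subst h; rw [Nat.mul_zero] at hm; omega
      · exact h
    set σ : Equiv.Perm (Fin m × Fin p) :=
      Equiv.prodCongr (Equiv.refl (Fin m)) (Equiv.addLeft (1 : Fin p)) with hσ
    have hσpow : ∀ j : ℕ, ∀ x : Fin m × Fin p,
        (σ ^ j) x = (x.1, (Equiv.addLeft (1 : Fin p) ^ j) x.2) := by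
      intro j
      induction j with
      | zero => intro x; simp
      | succ i ih =>
        intro x
        rw [pow_succ, Equiv.Perm.mul_apply, ih, pow_succ, Equiv.Perm.mul_apply, hσ]
        rfl
    have hσp : σ ^ p = 1 := by
      have h1 : (Equiv.addLeft (1 : Fin p)) ^ p = 1 := by
        rw [Equiv.nsmul_addLeft]
        have : p • (1 : Fin p) = 0 := by
          open Fin.CommRing in rw [nsmul_eq_mul, mul_one, Fin.natCast_self]
        rw [this, Equiv.addLeft_zero]
      apply Equiv.ext
      intro x
      rw [hσpow p x, h1]
      simp
    set C : Matrix (Fin m × Fin p) (Fin m × Fin p) ℂ := σ.permMatrix ℂ with hC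
    have hCk : C ^ k = 1 := by
      rw [hC, aux_permMatrix_pow]
      have : σ ^ k = 1 := by
        rw [hk, show p ^ α = p * p ^ (α - 1) by
          conv_lhs => rw [show α = 1 + (α - 1) by omega]
          rw [pow_add, pow_one], pow_mul, hσp, one_pow]
      rw [this]
      show ((1 : Equiv.Perm (Fin m × Fin p)).toPEquiv).toMatrix = 1
      rw [show (1 : Equiv.Perm (Fin m × Fin p)) = Equiv.refl _ from rfl, Equiv.toPEquiv_refl,
        PEquiv.toMatrix_refl]
    have hdiag : ∀ i, C i i = 0 := by
      intro i
      have hne : σ i ≠ i := by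
        rw [hσ]
        intro hcontra
        have h2 : (1 : Fin p) + i.2 = i.2 := congrArg Prod.snd hcontra
        have h3 : (1 : Fin p) = 0 := by
          have := add_right_cancel (b := i.2) (by rw [h2, zero_add] : (1 : Fin p) + i.2 = 0 + i.2)
          exact this
        rw [Fin.ext_iff, Fin.val_one', Fin.val_zero, Nat.mod_eq_of_lt hp.one_lt] at h3
        exact one_ne_zero h3
      show ((σ.toPEquiv).toMatrix : Matrix _ _ ℂ) i i = 0
      simp [PEquiv.toMatrix, Equiv.toPEquiv, Option.mem_def, hne]
    obtain ⟨A, B, hABC⟩ := aux_commutator (Fin m × Fin p) C hdiag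
    have hcardeq : Fintype.card (Fin m × Fin p) = Fintype.card (Fin n) := by
      simp [hm, mul_comm]
    set e : (Fin m × Fin p) ≃ Fin n := Fintype.equivOfCardEq hcardeq with he
    set φ := Matrix.reindexAlgEquiv ℂ ℂ e with hφ
    refine ⟨φ A, φ B, ?_⟩
    rw [← _root_.map_mul, ← _root_.map_mul, ← map_sub, ← _root_.map_pow, hABC, hCk, _root_.map_one]
end

section
/- Let S be a unital ring and n ≥ 2. Let P ∈ M_n(S) be the cyclic permutation matrix with P_{ij} = 1 if i ≡ j+1 (mod n) and 0 otherwise, and let D = diag(0, 1, 2, ..., n-1) ∈ M_n(S). Then (DP - PD)^n = (1 - n)·Id_n. -/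
theorem stmt_5 (S : Type*) [Ring S] (n : ℕ) (hn : 2 ≤ n)
    (P D : Matrix (Fin n) (Fin n) S)
    (hP : ∀ i j, P i j = if ((j : ℕ) + 1) % n = (i : ℕ) then 1 else 0)
    (hD : ∀ i j, D i j = if i = j then ((i : ℕ) : S) else 0) :
    (D * P - P * D) ^ n = ((1 : S) - (n : S)) • (1 : Matrix (Fin n) (Fin n) S) := by
  have hDdiag : D = Matrix.diagonal (fun i : Fin n => ((i : ℕ) : S)) := by
    ext i j
    rw [hD, Matrix.diagonal_apply]
  set A := D * P - P * D with hA
  have hAe : ∀ i j : Fin n, A i j =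
      if ((j : ℕ) + 1) % n = (i : ℕ) then
        (if (j : ℕ) = n - 1 then (1 : S) - n else 1) else 0 := by
    intro i j
    rw [hA, Matrix.sub_apply, hDdiag, Matrix.diagonal_mul, Matrix.mul_diagonal, hP]
    have hjlt := j.isLt
    split_ifs with hcond hj
    · have hi : (i : ℕ) = 0 := by
        rw [hj, (show n - 1 + 1 = n by omega), Nat.mod_self] at hcond
        omega
      have hj1 : ((j : ℕ) : S) = (n : S) - 1 := by
        rw [hj, Nat.cast_sub (by omega), Nat.cast_one]
      rw [mul_one, one_mul, hi, hj1, Nat.cast_zero, zero_sub, neg_sub]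
    · have hi : (i : ℕ) = (j : ℕ) + 1 := by
        have h1 : (j : ℕ) + 1 < n := by omega
        rw [Nat.mod_eq_of_lt h1] at hcond
        omega
      rw [mul_one, one_mul, hi]
      push_cast
      rw [add_sub_cancel_left]
    · rw [mul_zero, zero_mul, sub_zero]
  have key : ∀ k, 1 ≤ k → k ≤ n → ∀ i j : Fin n, (A ^ k) i j =
      if ((j : ℕ) + k) % n = (i : ℕ) then
        (if n ≤ (j : ℕ) + k then (1 : S) - n else 1) else 0 := by
    intro k
    induction k with
    | zero => intro h; exact absurd h (by omega)
    | succ k ih =>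
      intro _ hkn i j
      rcases Nat.eq_zero_or_pos k with hk0 | hk1
      · subst hk0
        rw [pow_one, hAe]
        have hj := j.isLt
        have h1 : ((j : ℕ) = n - 1) ↔ (n ≤ (j : ℕ) + 1) := by omega
        by_cases hc : ((j : ℕ) + 1) % n = (i : ℕ)
        · rw [if_pos hc, if_pos hc]
          by_cases hj2 : (j : ℕ) = n - 1
          · rw [if_pos hj2, if_pos (h1.mp hj2)]
          · rw [if_neg hj2, if_neg (fun h => hj2 (h1.mpr h))]
        · rw [if_neg hc, if_neg hc]
      · rw [pow_succ, Matrix.mul_apply]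
        have hjlt := j.isLt
        have hl0 : ((j : ℕ) + 1) % n < n := Nat.mod_lt _ (by omega)
        set l0 : Fin n := ⟨((j : ℕ) + 1) % n, hl0⟩ with hl0def
        rw [Finset.sum_eq_single l0]
        · rw [hAe l0 j, if_pos rfl, ih hk1 (by omega) i l0]
          have hlv : (l0 : ℕ) = ((j : ℕ) + 1) % n := rfl
          by_cases hj2 : (j : ℕ) = n - 1
          · have hl00 : (l0 : ℕ) = 0 := by
              rw [hlv, hj2, (show n - 1 + 1 = n by omega), Nat.mod_self]
            rw [if_pos hj2, hl00]
            have hk' : (0 + k) % n = k := by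
              rw [Nat.zero_add]; exact Nat.mod_eq_of_lt (by omega)
            have hc2 : ((j : ℕ) + (k + 1)) % n = k := by
              rw [hj2, (show n - 1 + (k + 1) = k + n by omega), Nat.add_mod_right]
              exact Nat.mod_eq_of_lt (by omega)
            rw [hk', hc2, if_neg (show ¬ n ≤ 0 + k by omega),
              if_pos (show n ≤ (j : ℕ) + (k + 1) by omega)]
            by_cases hci : k = (i : ℕ)
            · rw [if_pos hci, if_pos hci, one_mul]
            · rw [if_neg hci, if_neg hci, zero_mul]
          · have hl0v : (l0 : ℕ) = (j : ℕ) + 1 := by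
              rw [hlv, Nat.mod_eq_of_lt (by omega)]
            rw [if_neg hj2, mul_one, hl0v]
            have heq : (j : ℕ) + 1 + k = (j : ℕ) + (k + 1) := by omega
            rw [heq]
        · intro l _ hlne
          rw [hAe l j, if_neg, mul_zero]
          intro hc
          apply hlne
          exact Fin.ext hc.symm
        · intro habs
          exact absurd (Finset.mem_univ l0) habs
  ext i j
  rw [key n (by omega) le_rfl]
  have hj := j.isLt
  have h1 : ((j : ℕ) + n) % n = (j : ℕ) := by
    rw [Nat.add_mod_right, Nat.mod_eq_of_lt hj]
  rw [h1, if_pos (by omega : n ≤ (j : ℕ) + n)]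
  rw [Matrix.smul_apply, Matrix.one_apply]
  by_cases hc : i = j
  · rw [if_pos (by rw [hc] : (j : ℕ) = (i : ℕ)), if_pos hc, smul_eq_mul, mul_one]
  · rw [if_neg (fun h => hc (Fin.ext h.symm)), if_neg hc, smul_eq_mul, mul_zero]
end

section
/- Let S be a unital ring and n ≥ 2. Suppose 1 = v_1 + v_2 + ··· + v_{n-1} where each v_i is a central unit of S. Then there exist matrices A, B ∈ M_n(S) such that (AB - BA)^n = Id_n. -/
open Matrix Finset

open Fin.NatCast in
private lemma circ_pow (S : Type*) [Ring S] (m : ℕ) (k : ℕ) :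
    (Matrix.circulant (Pi.single 1 1 : Fin (m + 2) → S)) ^ k
      = Matrix.circulant (Pi.single ((k : Fin (m + 2))) 1) := by
  induction k with
  | zero => simp
  | succ k ih =>
      rw [pow_succ, ih, Matrix.circulant_mul, Matrix.mulVec_single]
      ext i j
      simp only [Pi.smul_apply, MulOpposite.op_one, one_smul, Matrix.col_apply, circulant_apply, Pi.single_apply, mul_one]
      congr 1
      rw [eq_iff_iff, sub_eq_iff_eq_add]
      push_cast
      rfl

theorem stmt_7 (S : Type*) [Ring S] (n : ℕ) (hn : 2 ≤ n)
    (v : Fin (n - 1) → S) (hvc : ∀ i, v i ∈ Set.center S) (hvu : ∀ i, IsUnit (v i))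
    (hsum : ∑ i, v i = 1) :
    ∃ A B : Matrix (Fin n) (Fin n) S, (A * B - B * A) ^ n = 1 := by
  obtain ⟨m, rfl⟩ : ∃ m, n = m + 2 := ⟨n - 2, by omega⟩
  have hsum' : ∑ i : Fin (m + 1), v i = 1 := hsum
  have hvc' : ∀ i : Fin (m + 1), v i ∈ Set.center S := hvc
  have hvu' : ∀ i : Fin (m + 1), IsUnit (v i) := hvu
  -- the sequence u : ℕ → S with u 0 = 1, u t = -v (t-1) for 1 ≤ t ≤ m+1
  set u : ℕ → S := fun t => if h : 0 < t ∧ t < m + 2 then -v ⟨t - 1, by omega⟩ else 1 with hu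
  have hu0 : u 0 = 1 := by simp [hu]
  have hu_unit : ∀ t, IsUnit (u t) := by
    intro t
    by_cases h : 0 < t ∧ t < m + 2
    · simpa [hu, h] using (hvu' ⟨t - 1, by omega⟩).neg
    · simp [hu, h]
  have hu_center : ∀ t, u t ∈ Set.center S := by
    intro t
    by_cases h : 0 < t ∧ t < m + 2
    · simpa [hu, h] using Set.neg_mem_center (hvc' ⟨t - 1, by omega⟩)
    · simp [hu, h, Set.one_mem_center]
  have hsum0 : ∑ t ∈ Finset.range (m + 2), u t = 0 := by
    rw [Finset.sum_range_succ']
    have h1 : ∑ i ∈ Finset.range (m + 1), u (i + 1) = -1 := by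
      rw [← Fin.sum_univ_eq_sum_range (fun i => u (i + 1)) (m + 1)]
      have heq : ∀ i : Fin (m + 1), u (↑i + 1) = -v i := by
        intro i
        have h : 0 < (i : ℕ) + 1 ∧ (i : ℕ) + 1 < m + 2 := by
          constructor
          · omega
          · have := i.isLt; omega
        simp [hu, h]
      rw [Finset.sum_congr rfl fun i _ => heq i, Finset.sum_neg_distrib, hsum']
    rw [h1, hu0]
    exact neg_add_cancel 1
  -- partial sums
  set s : Fin (m + 2) → S := fun k => ∑ j ∈ Finset.range k.val, u j with hs
  -- inverse units
  set w : Fin (m + 2) → S := fun j => ↑(hu_unit j.val).unit⁻¹ with hw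
  have hwu : ∀ j : Fin (m + 2), u j.val * w j = 1 := by
    intro j; simp [hw]
  have hw_comm : ∀ (j : Fin (m + 2)) (x : S), w j * x = x * w j := by
    intro j x
    have hc : u j.val * x = x * u j.val :=
      (Set.mem_center_iff.mp (hu_center j.val)).comm x
    have h1 : u j.val * w j = 1 := hwu j
    have h2 : w j * u j.val = 1 := by simp [hw]
    calc w j * x = w j * x * (u j.val * w j) := by rw [h1, mul_one]
      _ = w j * (x * u j.val) * w j := by noncomm_ring
      _ = w j * (u j.val * x) * w j := by rw [hc]
      _ = (w j * u j.val) * x * w j := by noncomm_ring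
      _ = x * w j := by rw [h2, one_mul]
  -- key: difference of consecutive partial sums
  have hkey : ∀ j : Fin (m + 2), s (j + 1) - s j = u j.val := by
    intro j
    by_cases h : (j : ℕ) < m + 1
    · have hval : ((j + 1 : Fin (m + 2)) : ℕ) = (j : ℕ) + 1 :=
        Fin.val_add_one_of_lt (by rw [Fin.lt_iff_val_lt_val, Fin.val_last]; exact h)
      simp only [hs, hval, Finset.sum_range_succ]
      exact add_sub_cancel_left _ _
    · have hj : (j : ℕ) = m + 1 := by have := j.isLt; omega
      have hjl : j = Fin.last (m + 1) := by
        simp [Fin.ext_iff, hj]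
      have h0 : (j + 1 : Fin (m + 2)) = 0 := by
        rw [hjl]; exact Fin.last_add_one (m + 1)
      rw [h0]
      have hz : s 0 = 0 := by simp [hs]
      rw [hz, zero_sub]
      show -(∑ t ∈ Finset.range j.val, u t) = u j.val
      rw [hj]
      have h2 := hsum0
      rw [Finset.sum_range_succ] at h2
      exact neg_eq_of_add_eq_zero_right h2
  refine ⟨Matrix.diagonal s, Matrix.of fun i j => if i = j + 1 then w j else 0, ?_⟩
  have hcomm : Matrix.diagonal s * Matrix.of (fun i j => if i = j + 1 then w j else 0)
      - Matrix.of (fun i j => if i = j + 1 then w j else 0) * Matrix.diagonal s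
      = Matrix.circulant (Pi.single 1 1 : Fin (m + 2) → S) := by
    ext i j
    simp only [Matrix.sub_apply, Matrix.diagonal_mul, Matrix.mul_diagonal, Matrix.of_apply,
      Matrix.circulant_apply, Pi.single_apply]
    by_cases h : i = j + 1
    · subst h
      rw [if_pos rfl, if_pos (by rw [add_sub_cancel_left]), hw_comm j (s j),
        ← sub_mul, hkey, hwu]
    · rw [if_neg h, if_neg (by
        intro hc
        exact h ((sub_eq_iff_eq_add.mp hc).trans (add_comm 1 j)))]
      simp
  rw [hcomm, circ_pow]
  simp
end

section
/- Let S be a unital ring. If there exists a central unit u of S such that 1 - u is also a central unit, then there exist matrices A, B ∈ M_3(S) with (AB - BA)^3 = Id_3. -/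
theorem stmt_9 (S : Type*) [Ring S] (u : S) (huc : u ∈ Set.center S) (huu : IsUnit u)
    (h1uc : (1 - u) ∈ Set.center S) (h1uu : IsUnit (1 - u)) :
    ∃ A B : Matrix (Fin 3) (Fin 3) S, (A * B - B * A) ^ 3 = 1 := by
  obtain ⟨U, hU⟩ := huu
  obtain ⟨W, hW⟩ := h1uu
  set v : S := (↑U⁻¹ : S) with hv
  set w : S := (↑W⁻¹ : S) with hw
  have huv : u * v = 1 := by rw [← hU, hv]; exact_mod_cast U.mul_inv
  have hvu : v * u = 1 := by rw [← hU, hv]; exact_mod_cast U.inv_mul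
  have h1uw : (1 - u) * w = 1 := by rw [← hW, hw]; exact_mod_cast W.mul_inv
  have hvcomm : v * (1 - u) = (1 - u) * v := by
    have := (Set.mem_center_iff.mp h1uc).1 v
    exact this.symm
  refine ⟨!![1, 0, 0; 0, 1 - u, 0; 0, 0, 0],
          !![0, v, 0; 0, 0, w; -1, 0, 0], ?_⟩
  have hC : (!![1, 0, 0; 0, 1 - u, 0; 0, 0, 0] * !![0, v, 0; 0, 0, w; -1, 0, 0]
      - !![0, v, 0; 0, 0, w; -1, 0, 0] * !![1, 0, 0; 0, 1 - u, 0; 0, 0, 0] : Matrix (Fin 3) (Fin 3) S)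
      = !![0, 1, 0; 0, 0, 1; 1, 0, 0] := by
    ext i j
    fin_cases i <;> fin_cases j <;>
      simp [Matrix.mul_apply, Fin.sum_univ_three] <;>
      first
        | (rw [mul_sub, mul_one, hvu, sub_sub_cancel])
        | exact h1uw
        | simp [Matrix.vecHead, Matrix.vecTail]
        | ring
  rw [hC]
  ext i j
  fin_cases i <;> fin_cases j <;>
    simp [pow_succ, Matrix.mul_apply, Fin.sum_univ_three, Matrix.one_apply, Matrix.vecHead, Matrix.vecTail]
end

section
/- Let S be a unital ring of characteristic dividing n - 2 (i.e., (n-2)·1_S = 0), where n ≥ 2. Then there exist A, B ∈ M_n(S) with (AB - BA)^n = Id_n. -/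
theorem stmt_11 (S : Type*) [Ring S] (n : ℕ) (hn : 2 ≤ n)
    (hchar : ((n - 2 : ℕ) : S) = 0) :
    ∃ A B : Matrix (Fin n) (Fin n) S, (A * B - B * A) ^ n = 1 := by
  haveI : NeZero n := ⟨by omega⟩
  set σ : Equiv.Perm (Fin n) := Equiv.addRight (1 : Fin n) with hσ
  let d : Fin n → S := fun i => ((i : ℕ) : S)
  let b : Fin n → S := fun i => if (i : ℕ) + 1 = n then 1 else -1
  refine ⟨Matrix.diagonal d, Matrix.of (fun i j => if j = i + 1 then b i else 0), ?_⟩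
  have key : ∀ i : Fin n, (d i - d (i + 1)) * b i = 1 := by
    intro i
    by_cases h : (i : ℕ) + 1 = n
    · have h0 : (i + 1 : Fin n) = 0 := by
        ext; simp [Fin.val_add, h]
      have hi : (i : ℕ) = (n - 2) + 1 := by omega
      simp only [b, d, h0, if_pos h, hi]
      push_cast
      rw [hchar]
      simp
    · have hlt : (i : ℕ) + 1 < n := lt_of_le_of_ne i.isLt.nat_succ_le h
      have hv : ((i + 1 : Fin n) : ℕ) = (i : ℕ) + 1 := by
        simp [Fin.val_add, Nat.mod_eq_of_lt hlt]
      simp only [b, d, if_neg h, hv]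
      push_cast
      have : ((i : ℕ) : S) - ((i : ℕ) + 1) = -1 := by abel
      rw [this, neg_mul_neg, one_mul]
  have hC : (Matrix.diagonal d * Matrix.of (fun i j => if j = i + 1 then b i else 0)
      - Matrix.of (fun i j => if j = i + 1 then b i else 0) * Matrix.diagonal d)
      = σ.toPEquiv.toMatrix := by
    ext i j
    rw [Matrix.sub_apply, Matrix.diagonal_mul, Matrix.mul_diagonal,
      PEquiv.toMatrix_apply, Equiv.toPEquiv_apply]
    have hσi : σ i = i + 1 := rfl
    rw [hσi]
    by_cases hj : j = i + 1
    · subst hj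
      simp only [Matrix.of_apply, if_pos rfl, if_true, Option.mem_def, Option.some.injEq]
      have hcomm : b (i + 1 -1) * d (i + 1) = d (i + 1) * b (i + 1 - 1) :=
        ((Nat.cast_commute _ _).symm).eq
      have hcomm' : b i * d (i + 1) = d (i + 1) * b i :=
        ((Nat.cast_commute (((i + 1 : Fin n) : ℕ)) (b i)).eq).symm
      rw [hcomm', ← sub_mul, key i]
    · simp only [Matrix.of_apply, if_neg hj, Option.mem_def, Option.some.injEq,
        if_neg (Ne.symm hj)]
      rw [mul_zero, zero_mul, sub_zero]
  rw [hC]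
  have hpow : ∀ k : ℕ, (σ.toPEquiv.toMatrix : Matrix (Fin n) (Fin n) S) ^ k
      = ((σ ^ k).toPEquiv.toMatrix) := by
    intro k
    induction k with
    | zero =>
        rw [pow_zero, show (σ ^ 0 : Equiv.Perm (Fin n)) = Equiv.refl _ from rfl,
          Equiv.toPEquiv_refl, PEquiv.toMatrix_refl]
    | succ k ih =>
        rw [pow_succ, ih, ← PEquiv.toMatrix_trans, ← Equiv.toPEquiv_trans,
          pow_succ', Equiv.Perm.mul_def]
  rw [hpow]
  have hone : σ ^ n = 1 := by
    rw [hσ, Equiv.nsmul_addRight]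
    have h0 : n • (1 : Fin n) = 0 := by
      open Fin.NatCast in simp [nsmul_eq_mul, Fin.natCast_self]
    rw [h0]
    ext x
    simp
  rw [hone, show (1 : Equiv.Perm (Fin n)) = Equiv.refl _ from rfl,
    Equiv.toPEquiv_refl, PEquiv.toMatrix_refl]
end

section
/- Let R be a unital ring with n invertible, ω a central unit with ω^n = 1 and ω^i - ω^j a unit for all 0 ≤ i ≠ j ≤ n-1, and u ∈ R with u^n = 1. Let e_0, ..., e_{n-1} be the spectral idempotents e_k = (1/n) ∑_j ω^{-kj} u^j. If the idempotents e_0, ..., e_{n-1} are cyclically equivalent, then there exists a unit v ∈ R with v u v^{-1} = ω^{-1} u. -/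
/-- Idempotents `e 0, …, e (n-1)` (indices mod `n`) are cyclically equivalent if for each
`i < n` there are `x ∈ e_i R e_{i+1}` and `y ∈ e_{i+1} R e_i` with `x*y = e_i`,
`y*x = e_{i+1}`. -/
def CyclicallyEquivalent {R : Type*} [Ring R] (n : ℕ) (e : ℕ → R) : Prop :=
  ∀ i < n, ∃ x y : R,
    (∃ r, x = e i * r * e ((i + 1) % n)) ∧
    (∃ r, y = e ((i + 1) % n) * r * e i) ∧
    x * y = e i ∧ y * x = e ((i + 1) % n)

private lemma geom_zero' {R : Type*} [Ring R] (n : ℕ) (ζ : R) (hζ : ζ ^ n = 1)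
    (hun : IsUnit (ζ - 1)) : ∑ j ∈ Finset.range n, ζ ^ j = 0 := by
  have h := geom_sum_mul ζ n
  rw [hζ, sub_self] at h
  exact (IsUnit.mul_left_eq_zero hun).mp h

private lemma commute_inverse {R : Type*} [Ring R] {a : R} (h : IsUnit a) {g : R}
    (hg : Commute g a) : Commute g (Ring.inverse a) := by
  rw [← h.unit_spec, Ring.inverse_unit]
  exact Commute.units_inv_right (by rwa [h.unit_spec])

theorem stmt_13 (R : Type*) [Ring R] (n : ℕ) (hn : 2 ≤ n) (hninv : IsUnit (n : R))
    (ω : R) (hωc : ω ∈ Set.center R) (hωu : IsUnit ω) (hωn : ω ^ n = 1)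
    (hdiff : ∀ i j, i < n → j < n → i ≠ j → IsUnit (ω ^ i - ω ^ j))
    (u : R) (hu : u ^ n = 1)
    (e : ℕ → R)
    (he : ∀ k, e k =
      Ring.inverse (n : R) * ∑ j ∈ Finset.range n, (Ring.inverse ω) ^ (k * j) * u ^ j)
    (hce : CyclicallyEquivalent n e) :
    ∃ v : Rˣ, (v : R) * u * (↑v⁻¹ : R) = Ring.inverse ω * u := by
  obtain ⟨m, rfl⟩ : ∃ m, n = m + 1 := ⟨n - 1, by omega⟩
  set c := Ring.inverse ω with hcdef
  set ν := Ring.inverse ((m + 1 : ℕ) : R) with hνdef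
  -- basic commutation facts
  have hcen : ∀ g : R, Commute g ω := fun g => ((Set.mem_center_iff.mp hωc).comm g).symm
  have hcc : ∀ g : R, Commute g c := fun g => commute_inverse hωu (hcen g)
  have hcω1 : c * ω = 1 := Ring.inverse_mul_cancel ω hωu
  have hωc1 : ω * c = 1 := Ring.mul_inverse_cancel ω hωu
  have hcun : IsUnit c := by
    rw [hcdef, ← hωu.unit_spec, Ring.inverse_unit]; exact (hωu.unit⁻¹).isUnit
  have hνc : ∀ g : R, Commute g ν := fun g =>
    commute_inverse hninv (Nat.cast_commute (m + 1) g).symm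
  have hν1 : ν * ((m + 1 : ℕ) : R) = 1 := Ring.inverse_mul_cancel _ hninv
  have hoc : ∀ k : ℕ, ω ^ k * c ^ k = 1 := fun k => by
    rw [← (hcc ω).mul_pow, hωc1, one_pow]
  have hco : ∀ k : ℕ, c ^ k * ω ^ k = 1 := fun k => by
    rw [← (hcc ω).symm.mul_pow, hcω1, one_pow]
  have hcn : c ^ (m + 1) = 1 := by
    have h := hco (m + 1); rwa [hωn, mul_one] at h
  have hucom : ∀ k : ℕ, Commute u (c ^ k) := fun k => (hcc u).pow_right k
  have hωcomk : ∀ (g : R) (k : ℕ), Commute g (ω ^ k) := fun g k => (hcen g).pow_right k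
  have hcm : c = ω ^ m := by
    calc c = (ω ^ m * ω) * c := by rw [← pow_succ, hωn, one_mul]
    _ = ω ^ m := by rw [mul_assoc, hωc1, mul_one]
  have hckm : ∀ k : ℕ, c ^ (k * m) = ω ^ k := by
    intro k
    have h1 : ω ^ (k * m) * ω ^ k = 1 := by
      rw [← pow_add]
      have h2 : k * m + k = (m + 1) * k := by ring
      rw [h2, pow_mul, hωn, one_pow]
    calc c ^ (k * m) = c ^ (k * m) * (ω ^ (k * m) * ω ^ k) := by rw [h1, mul_one]
    _ = (c ^ (k * m) * ω ^ (k * m)) * ω ^ k := by rw [mul_assoc]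
    _ = ω ^ k := by rw [hco, one_mul]
  -- u * e k = ω^k * e k
  have hue : ∀ k, u * e k = ω ^ k * e k := by
    intro k
    have key : u * (∑ j ∈ Finset.range (m + 1), c ^ (k * j) * u ^ j)
        = ω ^ k * (∑ j ∈ Finset.range (m + 1), c ^ (k * j) * u ^ j) := by
      rw [Finset.mul_sum, Finset.mul_sum]
      have l1 : ∀ j : ℕ, u * (c ^ (k * j) * u ^ j) = c ^ (k * j) * u ^ (j + 1) := fun j => by
        rw [← mul_assoc, (hucom (k * j)).eq, mul_assoc, ← pow_succ']
      have l2 : ∀ j : ℕ, ω ^ k * (c ^ (k * (j + 1)) * u ^ (j + 1)) = c ^ (k * j) * u ^ (j + 1) :=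
        fun j => by
        have e1 : k * (j + 1) = k + k * j := by ring
        rw [← mul_assoc, e1, pow_add, ← mul_assoc, hoc, one_mul]
      rw [Finset.sum_congr rfl fun j _ => l1 j,
        Finset.sum_range_succ (fun j => c ^ (k * j) * u ^ (j + 1)) m,
        Finset.sum_range_succ' (fun j => ω ^ k * (c ^ (k * j) * u ^ j)) m,
        Finset.sum_congr rfl fun j _ => l2 j]
      congr 1
      rw [hckm, hu, mul_one, Nat.mul_zero, pow_zero, pow_zero, one_mul, mul_one]
    rw [he k]
    calc u * (ν * ∑ j ∈ Finset.range (m + 1), c ^ (k * j) * u ^ j)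
        = ν * (u * ∑ j ∈ Finset.range (m + 1), c ^ (k * j) * u ^ j) := by
          rw [← mul_assoc, (hνc u).eq, mul_assoc]
    _ = ν * (ω ^ k * ∑ j ∈ Finset.range (m + 1), c ^ (k * j) * u ^ j) := by rw [key]
    _ = ω ^ k * (ν * ∑ j ∈ Finset.range (m + 1), c ^ (k * j) * u ^ j) := by
          rw [← mul_assoc, ← (hνc (ω ^ k)).eq, mul_assoc]
  have hec : ∀ k, Commute u (e k) := by
    intro k
    rw [he k]
    refine (hνc u).mul_right (Commute.sum_right _ _ _ fun j _ => ?_)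
    exact (hucom (k * j)).mul_right ((Commute.refl u).pow_right j)
  have heu : ∀ k, e k * u = ω ^ k * e k := fun k => by rw [← (hec k).eq, hue]
  have huje : ∀ k j, u ^ j * e k = ω ^ (k * j) * e k := by
    intro k j
    induction j with
    | zero => simp
    | succ j ih =>
      have harith : k + k * j = k * (j + 1) := by ring
      rw [pow_succ, mul_assoc, hue k, ← mul_assoc, (hωcomk (u ^ j) k).eq, mul_assoc, ih,
        ← mul_assoc, ← pow_add, harith]
  -- orthogonality / idempotency
  have horth : ∀ k l, k < m + 1 → l < m + 1 → e k * e l = if k = l then e k else 0 := by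
    intro k l hk hl
    have hS : (∑ j ∈ Finset.range (m + 1), c ^ (k * j) * u ^ j) * e l
        = (∑ j ∈ Finset.range (m + 1), (c ^ k * ω ^ l) ^ j) * e l := by
      rw [Finset.sum_mul, Finset.sum_mul]
      refine Finset.sum_congr rfl fun j _ => ?_
      rw [mul_assoc, huje l j, ← mul_assoc, pow_mul c k j, pow_mul ω l j,
        ← ((hcen c).pow_pow k l).mul_pow]
    have hmain : e k * e l
        = ν * ((∑ j ∈ Finset.range (m + 1), (c ^ k * ω ^ l) ^ j) * e l) := by
      conv_lhs => rw [he k]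
      rw [mul_assoc, hS]
    rw [hmain]
    by_cases hkl : k = l
    · subst hkl
      rw [if_pos rfl, hco k]
      simp only [one_pow, Finset.sum_const, Finset.card_range, nsmul_eq_mul, mul_one]
      rw [← mul_assoc, hν1, one_mul]
    · rw [if_neg hkl]
      have h1 : (c ^ k) ^ (m + 1) = 1 := by rw [← pow_mul, mul_comm, pow_mul, hcn, one_pow]
      have h2 : (ω ^ l) ^ (m + 1) = 1 := by rw [← pow_mul, mul_comm, pow_mul, hωn, one_pow]
      have hz : ∑ j ∈ Finset.range (m + 1), (c ^ k * ω ^ l) ^ j = 0 := by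
        apply geom_zero'
        · rw [((hcen c).pow_pow k l).mul_pow, h1, h2, one_mul]
        · have h3 : c ^ k * ω ^ l - 1 = c ^ k * (ω ^ l - ω ^ k) := by
            rw [mul_sub, hco k]
          rw [h3]
          exact (hcun.pow k).mul (hdiff l k hl hk (Ne.symm hkl))
      rw [hz, zero_mul, mul_zero]
  -- the idempotents sum to 1
  have hsum1 : ∑ k ∈ Finset.range (m + 1), e k = 1 := by
    have hswap : ∑ k ∈ Finset.range (m + 1), e k
        = ν * ∑ j ∈ Finset.range (m + 1),
            (∑ k ∈ Finset.range (m + 1), (c ^ j) ^ k) * u ^ j := by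
      rw [Finset.sum_congr rfl fun k _ => he k, ← Finset.mul_sum, Finset.sum_comm]
      congr 1
      refine Finset.sum_congr rfl fun j _ => ?_
      rw [Finset.sum_mul]
      refine Finset.sum_congr rfl fun k _ => ?_
      rw [mul_comm k j, pow_mul]
    rw [hswap]
    have hz : ∑ j ∈ Finset.range (m + 1),
        (∑ k ∈ Finset.range (m + 1), (c ^ j) ^ k) * u ^ j
        = (∑ k ∈ Finset.range (m + 1), (c ^ 0) ^ k) * u ^ 0 := by
      apply Finset.sum_eq_single
      · intro j hj hj0
        have hjlt := Finset.mem_range.mp hj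
        have hg : ∑ k ∈ Finset.range (m + 1), (c ^ j) ^ k = 0 := by
          apply geom_zero'
          · rw [← pow_mul, mul_comm, pow_mul, hcn, one_pow]
          · have h4 := hdiff 0 j (by omega) hjlt (Ne.symm hj0)
            rw [pow_zero] at h4
            have h5 : c ^ j - 1 = c ^ j * (1 - ω ^ j) := by
              rw [mul_sub, mul_one, hco]
            rw [h5]
            exact (hcun.pow j).mul h4
        rw [hg, zero_mul]
      · intro h; exact absurd (Finset.mem_range.mpr (by omega)) h
    rw [hz]
    simp only [pow_zero, one_pow, Finset.sum_const, Finset.card_range, nsmul_eq_mul,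
      mul_one]
    exact hν1
  -- modular index facts
  have hmlt : ∀ i : ℕ, (i + 1) % (m + 1) < m + 1 := fun i => Nat.mod_lt _ (by omega)
  have hmeq : ∀ i, i < m → (i + 1) % (m + 1) = i + 1 := fun i h => Nat.mod_eq_of_lt (by omega)
  have hmm : (m + 1) % (m + 1) = 0 := Nat.mod_self _
  have hminj : ∀ i j, i < m + 1 → j < m + 1 →
      (i + 1) % (m + 1) = (j + 1) % (m + 1) → i = j := by
    intro i j hi hj h
    rcases Nat.lt_or_ge i m with h1 | h1 <;> rcases Nat.lt_or_ge j m with h2 | h2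
    · rw [hmeq i h1, hmeq j h2] at h; omega
    · have hj' : j = m := by omega
      subst hj'; rw [hmeq i h1, hmm] at h; omega
    · have hi' : i = m := by omega
      subst hi'; rw [hmeq j h2, hmm] at h; omega
    · omega
  -- choose the cyclic equivalence data
  have hce' : ∀ i, ∃ x : R, ∃ y : R, i < m + 1 →
      (∃ r, x = e i * r * e ((i + 1) % (m + 1))) ∧
      (∃ r, y = e ((i + 1) % (m + 1)) * r * e i) ∧
      x * y = e i ∧ y * x = e ((i + 1) % (m + 1)) := by
    intro i
    by_cases h : i < m + 1
    · obtain ⟨x, y, h1, h2, h3, h4⟩ := hce i h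
      exact ⟨x, y, fun _ => ⟨h1, h2, h3, h4⟩⟩
    · exact ⟨0, 0, fun h' => absurd h' h⟩
  choose x y hxy using hce'
  have hyx : ∀ i, i < m + 1 → y i * x i = e ((i + 1) % (m + 1)) := fun i h => (hxy i h).2.2.2
  have hxyd : ∀ i, i < m + 1 → x i * y i = e i := fun i h => (hxy i h).2.2.1
  have hyx0 : ∀ i j, i < m + 1 → j < m + 1 → i ≠ j → y i * x j = 0 := by
    intro i j hi hj hij
    obtain ⟨r, hr⟩ := (hxy i hi).2.1
    obtain ⟨s, hs⟩ := (hxy j hj).1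
    have h0 : e i * e j = 0 := by rw [horth i j hi hj, if_neg hij]
    rw [hr, hs]
    calc e ((i + 1) % (m + 1)) * r * e i * (e j * s * e ((j + 1) % (m + 1)))
        = e ((i + 1) % (m + 1)) * r * ((e i * e j) * (s * e ((j + 1) % (m + 1)))) := by
          noncomm_ring
      _ = 0 := by rw [h0, zero_mul, mul_zero]
  have hxy0 : ∀ i j, i < m + 1 → j < m + 1 → i ≠ j → x i * y j = 0 := by
    intro i j hi hj hij
    obtain ⟨r, hr⟩ := (hxy i hi).1
    obtain ⟨s, hs⟩ := (hxy j hj).2.1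
    have hne : (i + 1) % (m + 1) ≠ (j + 1) % (m + 1) := fun h => hij (hminj i j hi hj h)
    have h0 : e ((i + 1) % (m + 1)) * e ((j + 1) % (m + 1)) = 0 := by
      rw [horth _ _ (hmlt i) (hmlt j), if_neg hne]
    rw [hr, hs]
    calc e i * r * e ((i + 1) % (m + 1)) * (e ((j + 1) % (m + 1)) * s * e j)
        = e i * r * ((e ((i + 1) % (m + 1)) * e ((j + 1) % (m + 1))) * (s * e j)) := by
          noncomm_ring
      _ = 0 := by rw [h0, zero_mul, mul_zero]
  set v := ∑ i ∈ Finset.range (m + 1), y i with hv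
  set w := ∑ i ∈ Finset.range (m + 1), x i with hw
  have hshift : ∀ f : ℕ → R, ∑ i ∈ Finset.range (m + 1), f ((i + 1) % (m + 1))
      = ∑ i ∈ Finset.range (m + 1), f i := by
    intro f
    have h1 : ∑ i ∈ Finset.range m, f ((i + 1) % (m + 1)) = ∑ i ∈ Finset.range m, f (i + 1) :=
      Finset.sum_congr rfl fun i hi => by rw [hmeq i (Finset.mem_range.mp hi)]
    rw [Finset.sum_range_succ, hmm, h1, Finset.sum_range_succ' f m]
  have hwv : w * v = 1 := by
    rw [hw, hv, Finset.sum_mul_sum]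
    have hin : ∀ i ∈ Finset.range (m + 1), ∑ j ∈ Finset.range (m + 1), x i * y j = e i := by
      intro i hi
      rw [Finset.sum_eq_single i]
      · exact hxyd i (Finset.mem_range.mp hi)
      · intro j hj hji
        exact hxy0 i j (Finset.mem_range.mp hi) (Finset.mem_range.mp hj) (Ne.symm hji)
      · intro h; exact absurd hi h
    rw [Finset.sum_congr rfl hin, hsum1]
  have hvw : v * w = 1 := by
    rw [hw, hv, Finset.sum_mul_sum]
    have hin : ∀ i ∈ Finset.range (m + 1), ∑ j ∈ Finset.range (m + 1), y i * x j
        = e ((i + 1) % (m + 1)) := by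
      intro i hi
      rw [Finset.sum_eq_single i]
      · exact hyx i (Finset.mem_range.mp hi)
      · intro j hj hji
        exact hyx0 i j (Finset.mem_range.mp hi) (Finset.mem_range.mp hj) (Ne.symm hji)
      · intro h; exact absurd hi h
    rw [Finset.sum_congr rfl hin, hshift e, hsum1]
  refine ⟨⟨v, w, hvw, hwv⟩, ?_⟩
  show v * u * w = c * u
  have hyu : ∀ i, i < m + 1 → y i * u = ω ^ i * y i := by
    intro i hi
    obtain ⟨r, hr⟩ := (hxy i hi).2.1
    rw [hr]
    calc e ((i + 1) % (m + 1)) * r * e i * u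
        = e ((i + 1) % (m + 1)) * r * (e i * u) := by rw [mul_assoc]
      _ = e ((i + 1) % (m + 1)) * r * (ω ^ i * e i) := by rw [heu]
      _ = ω ^ i * (e ((i + 1) % (m + 1)) * r * e i) := by
          rw [← mul_assoc, (hωcomk (e ((i + 1) % (m + 1)) * r) i).eq, mul_assoc]
  have hL : v * u = ∑ i ∈ Finset.range (m + 1), ω ^ i * y i := by
    rw [hv, Finset.sum_mul]
    exact Finset.sum_congr rfl fun i hi => hyu i (Finset.mem_range.mp hi)
  have hLw : v * u * w = ∑ i ∈ Finset.range (m + 1), ω ^ i * e ((i + 1) % (m + 1)) := by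
    rw [hL, hw, Finset.sum_mul_sum]
    refine Finset.sum_congr rfl fun i hi => ?_
    rw [Finset.sum_eq_single i]
    · rw [mul_assoc, hyx i (Finset.mem_range.mp hi)]
    · intro j hj hji
      rw [mul_assoc, hyx0 i j (Finset.mem_range.mp hi) (Finset.mem_range.mp hj) (Ne.symm hji),
        mul_zero]
    · intro h; exact absurd hi h
  have hR : c * u = ∑ i ∈ Finset.range (m + 1), (c * ω ^ i) * e i := by
    calc c * u = c * (u * ∑ k ∈ Finset.range (m + 1), e k) := by rw [hsum1, mul_one]
    _ = ∑ i ∈ Finset.range (m + 1), (c * ω ^ i) * e i := by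
        rw [Finset.mul_sum, Finset.mul_sum]
        refine Finset.sum_congr rfl fun i _ => ?_
        rw [hue i, ← mul_assoc]
  rw [hLw, hR, Finset.sum_range_succ, Finset.sum_range_succ' (fun i => (c * ω ^ i) * e i) m]
  congr 1
  · refine Finset.sum_congr rfl fun i hi => ?_
    rw [hmeq i (Finset.mem_range.mp hi)]
    congr 1
    rw [pow_succ', ← mul_assoc, hcω1, one_mul]
  · rw [hmm, pow_zero, mul_one, hcm]
end

section
/- Let R be a unital ring with n invertible, ω a central unit with ω^n = 1 and ω^i - ω^j a unit for all 0 ≤ i ≠ j ≤ n-1, and u ∈ R with u^n = 1. Let e_0, ..., e_{n-1} be the spectral idempotents e_k = (1/n) ∑_j ω^{-kj} u^j. If there exists a unit v ∈ R with v u v^{-1} = ω^{-1} u, then v e_k v^{-1} = e_{k+1} for all k (indices modulo n), and consequently the idempotents e_0, ..., e_{n-1} are cyclically equivalent. -/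
theorem stmt_14 (R : Type*) [Ring R] (n : ℕ) (hn : 2 ≤ n) (hninv : IsUnit (n : R))
    (ω : R) (hωc : ω ∈ Set.center R) (hωu : IsUnit ω) (hωn : ω ^ n = 1)
    (hdiff : ∀ i j, i < n → j < n → i ≠ j → IsUnit (ω ^ i - ω ^ j))
    (u : R) (hu : u ^ n = 1)
    (e : ℕ → R)
    (he : ∀ k, e k =
      Ring.inverse (n : R) * ∑ j ∈ Finset.range n, (Ring.inverse ω) ^ (k * j) * u ^ j)
    (v : Rˣ) (hv : (v : R) * u * (↑v⁻¹ : R) = Ring.inverse ω * u) :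
    (∀ k < n, (v : R) * e k * (↑v⁻¹ : R) = e ((k + 1) % n)) ∧
      CyclicallyEquivalent n e := by
  set w : R := Ring.inverse ω with hwdef
  set c : R := Ring.inverse (n : R) with hcdef
  have hωw : ω * w = 1 := Ring.mul_inverse_cancel ω hωu
  have hwω : w * ω = 1 := Ring.inverse_mul_cancel ω hωu
  have hωcomm : ∀ r : R, ω * r = r * ω := fun r => (Set.mem_center_iff.mp hωc).comm r
  have hwcomm : ∀ r : R, w * r = r * w := by
    intro r
    calc w * r = w * (r * (ω * w)) := by rw [hωw, mul_one]
      _ = w * ((r * ω) * w) := by rw [mul_assoc r]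
      _ = w * ((ω * r) * w) := by rw [hωcomm]
      _ = ((w * ω) * r) * w := by rw [← mul_assoc, ← mul_assoc]
      _ = r * w := by rw [hwω, one_mul]
  have hcw : ∀ x : R, Commute w x := fun x => hwcomm x
  have hwn : w ^ n = 1 := by
    have h1 : (w * ω) ^ n = w ^ n * ω ^ n := (hcw ω).mul_pow n
    rw [hwω, one_pow, hωn, mul_one] at h1
    exact h1.symm
  obtain ⟨ν, hν⟩ := hninv
  have hcν : c = ↑ν⁻¹ := by rw [hcdef, ← hν, Ring.inverse_unit]
  have hccomm : ∀ x : R, Commute c x := by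
    intro x
    have h1 : Commute x ((ν : Rˣ) : R) := by rw [hν]; exact (Nat.cast_commute n x).symm
    rw [hcν]
    exact h1.units_inv_right.symm
  set f : ℕ → ℕ → R := fun k m => w ^ (k * m) * u ^ m with hfdef
  have hfmul : ∀ k a b, f k a * f k b = f k (a + b) := by
    intro k a b
    show w ^ (k*a) * u ^ a * (w ^ (k*b) * u ^ b) = w ^ (k*(a+b)) * u ^ (a+b)
    rw [mul_assoc, ← mul_assoc (u ^ a), ← ((hcw u).pow_pow (k*b) a).eq, mul_assoc,
      ← mul_assoc (w ^ (k*a)), ← pow_add, ← pow_add, Nat.mul_add]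
  have hwmul1 : ∀ m : ℕ, w ^ (m * n) = 1 := by
    intro m; rw [mul_comm, pow_mul, hwn, one_pow]
  have hfper : ∀ k m, f k (m + n) = f k m := by
    intro k m
    show w ^ (k*(m+n)) * u ^ (m+n) = w ^ (k*m) * u ^ m
    rw [Nat.mul_add, pow_add, hwmul1, mul_one, pow_add, hu, mul_one]
  have hfshift : ∀ k, f (k + n) = f k := by
    intro k; funext m
    show w ^ ((k+n)*m) * u ^ m = w ^ (k*m) * u ^ m
    rw [Nat.add_mul, pow_add, mul_comm n m, hwmul1, mul_one]
  set S : ℕ → R := fun k => ∑ j ∈ Finset.range n, f k j with hSdef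
  have heS : ∀ k, e k = c * S k := fun k => he k
  have hshift : ∀ g : ℕ → R, (∀ m, g (m + n) = g m) →
      ∑ l ∈ Finset.range n, g (l + 1) = ∑ l ∈ Finset.range n, g l := by
    intro g hg
    have h1 := Finset.sum_range_succ' g n
    have h2 := Finset.sum_range_succ g n
    have h3 : g n = g 0 := by simpa using hg 0
    rw [h2, h3] at h1
    exact (add_right_cancel h1).symm
  have hrot : ∀ k j, ∑ l ∈ Finset.range n, f k (j + l) = S k := by
    intro k j
    induction j with
    | zero => simp [hSdef]
    | succ j ih =>
      have hper' : ∀ m, f k (j + (m + n)) = f k (j + m) := by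
        intro m; rw [← Nat.add_assoc]; exact hfper k (j + m)
      have hs := hshift (fun l => f k (j + l)) hper'
      calc (∑ l ∈ Finset.range n, f k (j + 1 + l))
          = ∑ l ∈ Finset.range n, f k (j + (l + 1)) := by
            apply Finset.sum_congr rfl; intro l _; congr 1; omega
        _ = ∑ l ∈ Finset.range n, f k (j + l) := hs
        _ = S k := ih
  have hSS : ∀ k, S k * S k = (n : R) * S k := by
    intro k
    rw [hSdef]
    rw [Finset.sum_mul]
    calc (∑ j ∈ Finset.range n, f k j * ∑ l ∈ Finset.range n, f k l)
        = ∑ j ∈ Finset.range n, ∑ l ∈ Finset.range n, f k (j + l) := by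
          apply Finset.sum_congr rfl; intro j _
          rw [Finset.mul_sum]
          exact Finset.sum_congr rfl fun l _ => hfmul k j l
      _ = ∑ j ∈ Finset.range n, S k := by
          exact Finset.sum_congr rfl fun j _ => hrot k j
      _ = (n : R) * S k := by rw [Finset.sum_const, Finset.card_range, nsmul_eq_mul]
  have hidem : ∀ k, e k * e k = e k := by
    intro k
    rw [heS]
    calc c * S k * (c * S k) = c * (c * (S k * S k)) := by
          simp only [mul_assoc]
          rw [← mul_assoc (S k) c, ← (hccomm (S k)).eq, mul_assoc]
      _ = c * ((c * (n : R)) * S k) := by rw [hSS, mul_assoc]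
      _ = c * S k := by rw [hcdef, Ring.inverse_mul_cancel _ ⟨ν, hν⟩, one_mul]
  have hvuj : ∀ j : ℕ, (v : R) * u ^ j * (↑v⁻¹ : R) = w ^ j * u ^ j := by
    intro j
    induction j with
    | zero => simp
    | succ j ih =>
      calc (v : R) * u ^ (j+1) * (↑v⁻¹ : R)
          = ((v : R) * u ^ j * ↑v⁻¹) * ((v : R) * u * ↑v⁻¹) := by
            rw [pow_succ]
            simp only [mul_assoc, Units.inv_mul_cancel_left]
        _ = (w ^ j * u ^ j) * (w * u) := by rw [ih, hv]
        _ = w ^ (j+1) * u ^ (j+1) := by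
            rw [pow_succ, pow_succ]
            simp only [mul_assoc]
            rw [← mul_assoc (u ^ j) w, ← (hcw (u ^ j)).eq, mul_assoc]
  have hve : ∀ k, (v : R) * e k * (↑v⁻¹ : R) = e (k + 1) := by
    intro k
    rw [heS, heS]
    have h1 : (v : R) * (c * S k) * (↑v⁻¹ : R) = c * ((v : R) * S k * ↑v⁻¹) := by
      simp only [mul_assoc]
      rw [← mul_assoc (v : R) c, ← (hccomm (v : R)).eq, mul_assoc]
    rw [h1]
    congr 1
    rw [hSdef, Finset.mul_sum, Finset.sum_mul]
    apply Finset.sum_congr rfl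
    intro j _
    show (v : R) * (w ^ (k*j) * u ^ j) * ↑v⁻¹ = w ^ ((k+1)*j) * u ^ j
    calc (v : R) * (w ^ (k*j) * u ^ j) * ↑v⁻¹
        = w ^ (k*j) * ((v : R) * u ^ j * ↑v⁻¹) := by
          simp only [mul_assoc]
          rw [← mul_assoc (v : R) (w ^ (k*j)), ← ((hcw (v : R)).pow_left (k*j)).eq,
            mul_assoc]
      _ = w ^ (k*j) * (w ^ j * u ^ j) := by rw [hvuj]
      _ = w ^ ((k+1)*j) * u ^ j := by rw [← mul_assoc, ← pow_add, Nat.add_mul, one_mul]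
  have hemod : ∀ k < n, e ((k + 1) % n) = e (k + 1) := by
    intro k hk
    rcases Nat.lt_or_ge (k + 1) n with h | h
    · rw [Nat.mod_eq_of_lt h]
    · have h' : k + 1 = n := by omega
      have hf0 : f n = f 0 := by simpa using hfshift 0
      rw [h', Nat.mod_self, heS, heS]
      simp only [hSdef, hf0]
  have hmain : ∀ k < n, (v : R) * e k * (↑v⁻¹ : R) = e ((k + 1) % n) := by
    intro k hk
    rw [hve, hemod k hk]
  refine ⟨hmain, ?_⟩
  intro i hi
  have hvei := hmain i hi
  refine ⟨e i * ↑v⁻¹, (v : R) * e i, ⟨↑v⁻¹, ?_⟩, ⟨(v : R), ?_⟩, ?_, ?_⟩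
  · rw [← hvei]
    simp only [mul_assoc, Units.inv_mul_cancel_left]
    rw [← mul_assoc, hidem]
  · rw [← hvei]
    simp only [mul_assoc, Units.inv_mul_cancel_left]
    rw [hidem]
  · simp only [mul_assoc, Units.inv_mul_cancel_left]
    exact hidem i
  · rw [← hvei]
    simp only [mul_assoc]
    rw [← mul_assoc (e i) (e i), hidem]
end

section
/- Let R be a unital ring in which 2 is invertible, and let u ∈ R satisfy u^2 = 1. Set e_0 = (1+u)/2 and e_1 = (1-u)/2. Then the following are equivalent: (1) there exist x ∈ e_0 R e_1 and y ∈ e_1 R e_0 with xy = e_0 and yx = e_1; (2) there exist x, y ∈ R with xy - yx = u and xy + yx = 1. -/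
theorem stmt_16 (R : Type*) [Ring R] (h2 : IsUnit (2 : R)) (u : R) (hu : u ^ 2 = 1)
    (e0 e1 : R) (he0 : e0 = Ring.inverse (2 : R) * (1 + u))
    (he1 : e1 = Ring.inverse (2 : R) * (1 - u)) :
    (∃ x y : R, (∃ r, x = e0 * r * e1) ∧ (∃ r, y = e1 * r * e0) ∧
        x * y = e0 ∧ y * x = e1) ↔
      (∃ x y : R, x * y - y * x = u ∧ x * y + y * x = 1) := by
  obtain ⟨v, hv⟩ := h2
  have hinv : Ring.inverse (2 : R) = ↑v⁻¹ := by rw [← hv]; exact Ring.inverse_unit v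
  set i : R := Ring.inverse (2 : R) with hi
  have hci : ∀ a : R, i * a = a * i := by
    intro a
    have h1 : Commute ((1 : R) + 1) a := (Commute.one_left a).add_left (Commute.one_left a)
    have h2' : Commute ((v : R)) a := by rw [hv, ← one_add_one_eq_two]; exact h1
    have := h2'.units_inv_left
    rw [hinv]; exact this.eq
  have hi2 : i * 2 = 1 := Ring.inverse_mul_cancel _ ⟨v, hv⟩
  have hsum : e0 + e1 = 1 := by
    rw [he0, he1, ← mul_add]
    have : (1 + u) + (1 - u) = 2 := by rw [add_add_sub_cancel, one_add_one_eq_two]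
    rw [this, hi2]
  have hdiff : e0 - e1 = u := by
    rw [he0, he1, ← mul_sub]
    have : (1 + u) - (1 - u) = 2 * u := by rw [two_mul]; abel
    rw [this, ← mul_assoc, hi2, one_mul]
  have key : ∀ w : R, w * w = 2 * w → (i * w) * (i * w) = i * w := by
    intro w hw
    calc (i * w) * (i * w) = i * ((w * i) * w) := by noncomm_ring
      _ = i * ((i * w) * w) := by rw [← hci w]
      _ = i * (i * (w * w)) := by rw [mul_assoc]
      _ = i * (i * (2 * w)) := by rw [hw]
      _ = i * w := by rw [← mul_assoc i 2 w, hi2, one_mul]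
  have he00 : e0 * e0 = e0 := by
    rw [he0]
    refine key _ ?_
    have h : (1 + u) * (1 + u) = u ^ 2 + (1 + u) + u := by noncomm_ring
    rw [h, hu, two_mul]; abel
  have he11 : e1 * e1 = e1 := by
    rw [he1]
    refine key _ ?_
    have h : (1 - u) * (1 - u) = u ^ 2 + (1 - u) - u := by noncomm_ring
    rw [h, hu, two_mul]; abel
  constructor
  · rintro ⟨x, y, -, -, hxy, hyx⟩
    refine ⟨x, y, ?_, ?_⟩
    · rw [hxy, hyx, hdiff]
    · rw [hxy, hyx, hsum]
  · rintro ⟨x, y, h1, h2'⟩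
    have hxy : x * y = e0 := by
      have h2xy : 2 * (x * y) = 1 + u := by
        calc 2 * (x * y) = (x * y - y * x) + (x * y + y * x) := by rw [two_mul]; abel
          _ = u + 1 := by rw [h1, h2']
          _ = 1 + u := by abel
      calc x * y = i * (2 * (x * y)) := by rw [← mul_assoc, hi2, one_mul]
        _ = i * (1 + u) := by rw [h2xy]
        _ = e0 := he0.symm
    have hyx : y * x = e1 := by
      have h2yx : 2 * (y * x) = 1 - u := by
        calc 2 * (y * x) = (x * y + y * x) - (x * y - y * x) := by rw [two_mul]; abel
          _ = 1 - u := by rw [h1, h2']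
      calc y * x = i * (2 * (y * x)) := by rw [← mul_assoc, hi2, one_mul]
        _ = i * (1 - u) := by rw [h2yx]
        _ = e1 := he1.symm
    have hax : e0 * x = x * e1 := by rw [← hxy, ← hyx, mul_assoc]
    have hby : e1 * y = y * e0 := by rw [← hxy, ← hyx, mul_assoc]
    refine ⟨e0 * x * e1, e1 * y * e0, ⟨x, rfl⟩, ⟨y, rfl⟩, ?_, ?_⟩
    · calc e0 * x * e1 * (e1 * y * e0)
          = x * e1 * e1 * (e1 * y * e0) := by rw [hax]
        _ = x * (e1 * (e1 * (e1 * y) * e0)) := by noncomm_ring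
        _ = x * (e1 * (e1 * (y * e0) * e0)) := by rw [hby]
        _ = x * (e1 * e1 * y * (e0 * e0)) := by noncomm_ring
        _ = x * (e1 * y * e0) := by rw [he11, he00]
        _ = x * (y * e0 * e0) := by rw [hby]
        _ = x * y * (e0 * e0) := by noncomm_ring
        _ = e0 := by rw [hxy, he00, he00]
    · calc e1 * y * e0 * (e0 * x * e1)
          = y * e0 * e0 * (e0 * x * e1) := by rw [hby]
        _ = y * (e0 * (e0 * (e0 * x) * e1)) := by noncomm_ring
        _ = y * (e0 * (e0 * (x * e1) * e1)) := by rw [hax]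
        _ = y * (e0 * e0 * x * (e1 * e1)) := by noncomm_ring
        _ = y * (e0 * x * e1) := by rw [he00, he11]
        _ = y * (x * e1 * e1) := by rw [hax]
        _ = y * x * (e1 * e1) := by noncomm_ring
        _ = e1 := by rw [hyx, he11, he11]
end

section
/- Let R be a unital ring with n invertible, ω a central unit with ω^n = 1 and ω^i - ω^j a unit for all 0 ≤ i ≠ j ≤ n-1. Suppose there exist a, b ∈ R with u := ab - ba satisfying u^n = 1, and suppose there exists a unit v ∈ R with v u v^{-1} = ω^{-1} u. Then R ≅ M_n(S) for S = e_0 R e_0, where e_0 = (1/n)(1 + u + u^2 + ··· + u^{n-1}). -/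
/-- The corner ring `eRe = {x : R | e * x * e = x}` of an idempotent `e`, as a
non-unital subring of `R` (it is a ring with identity `e`). -/
def cornerSubring {R : Type*} [Ring R] (e : R) (he : IsIdempotentElem e) :
    NonUnitalSubring R where
  carrier := {x | e * x * e = x}
  zero_mem' := by simp
  add_mem' := by
    intro a b ha hb
    simp only [Set.mem_setOf_eq] at *
    rw [mul_add, add_mul, ha, hb]
  neg_mem' := by
    intro a ha
    simp only [Set.mem_setOf_eq] at *
    rw [mul_neg, neg_mul, ha]
  mul_mem' := by
    intro a b ha hb
    simp only [Set.mem_setOf_eq] at *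
    have ha1 : e * a = a := by rw [← ha, ← mul_assoc, ← mul_assoc, he.eq]
    have hb1 : b * e = b := by rw [← hb, mul_assoc, he.eq]
    rw [← mul_assoc, ha1, mul_assoc, hb1]

section MatrixUnits

variable {R : Type*} [Ring R]

lemma mem_cornerSubring_of (e : R) (he : IsIdempotentElem e) (y : R) :
    e * y * e ∈ cornerSubring e he := by
  show e * (e * y * e) * e = e * y * e
  simp only [← mul_assoc]
  rw [he.eq, mul_assoc, he.eq]

/-- A complete system of "matrix units" generated by an idempotent `e` and a unit `v`
yields an isomorphism of `R` with the `n × n` matrix ring over the corner ring of `e`. -/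
noncomputable def matrixUnitsEquiv (n : ℕ) (e : R) (he : IsIdempotentElem e) (v : Rˣ)
    (hsum : ∑ k ∈ Finset.range n, (↑(v⁻¹ ^ k) : R) * e * (↑(v ^ k) : R) = 1)
    (horthp : ∀ k, 0 < k → k < n → e * (↑(v ^ k) : R) * e = 0)
    (horthm : ∀ k, 0 < k → k < n → e * (↑(v⁻¹ ^ k) : R) * e = 0) :
    R ≃+* Matrix (Fin n) (Fin n) (cornerSubring e he) := by
  have hek : ∀ a c : ℕ, a < n → c < n →
      e * ((↑(v ^ a) : R) * (↑(v⁻¹ ^ c) : R)) * e = if a = c then e else 0 := by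
    intro a c ha hc
    rcases lt_trichotomy a c with h | h | h
    · have hpow : (v ^ a) * (v⁻¹ ^ c) = v⁻¹ ^ (c - a) := by
        have h2 : v⁻¹ ^ c = v⁻¹ ^ a * v⁻¹ ^ (c - a) := by
          rw [← pow_add, Nat.add_sub_cancel' h.le]
        rw [h2, ← mul_assoc, inv_pow, mul_inv_cancel, one_mul]
      rw [if_neg h.ne, ← Units.val_mul, hpow, horthm _ (Nat.sub_pos_of_lt h) (by omega)]
    · subst h
      rw [if_pos rfl, inv_pow, ← Units.val_mul, mul_inv_cancel, Units.val_one, mul_one, he.eq]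
    · have hpow : (v ^ a) * (v⁻¹ ^ c) = v ^ (a - c) := by
        have h2 : v ^ a = v ^ (a - c) * v ^ c := by
          rw [← pow_add, Nat.sub_add_cancel h.le]
        rw [h2, mul_assoc, inv_pow, mul_inv_cancel, mul_one]
      rw [if_neg h.ne', ← Units.val_mul, hpow, horthp _ (Nat.sub_pos_of_lt h) (by omega)]
  exact {
    toFun := fun x => fun i j => ⟨e * ((↑(v ^ (i : ℕ)) : R) * x * (↑(v⁻¹ ^ (j : ℕ)) : R)) * e,
      mem_cornerSubring_of e he _⟩
    invFun := fun M => ∑ i : Fin n, ∑ j : Fin n,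
      (↑(v⁻¹ ^ (i : ℕ)) : R) * ((M i j : R)) * (↑(v ^ (j : ℕ)) : R)
    left_inv := by
      intro x
      have key : ∀ i j : Fin n,
          (↑(v⁻¹ ^ (i : ℕ)) : R) * (e * ((↑(v ^ (i : ℕ)) : R) * x * (↑(v⁻¹ ^ (j : ℕ)) : R)) * e)
            * (↑(v ^ (j : ℕ)) : R)
          = ((↑(v⁻¹ ^ (i : ℕ)) : R) * e * (↑(v ^ (i : ℕ)) : R)) * x *
            ((↑(v⁻¹ ^ (j : ℕ)) : R) * e * (↑(v ^ (j : ℕ)) : R)) := by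
        intro i j; simp only [mul_assoc]
      simp only [key]
      simp only [← Finset.sum_mul, ← Finset.mul_sum]
      rw [Fin.sum_univ_eq_sum_range (fun k => (↑(v⁻¹ ^ k) : R) * e * (↑(v ^ k) : R)), hsum,
        one_mul, mul_one]
    right_inv := by
      intro M
      funext i j
      apply Subtype.ext
      show e * (_ * (∑ k : Fin n, ∑ l : Fin n, _) * _) * e = (M i j : R)
      simp only [Finset.mul_sum, Finset.sum_mul]
      have step : ∀ k l : Fin n,
          e * ((↑(v ^ (i : ℕ)) : R) * ((↑(v⁻¹ ^ (k : ℕ)) : R) * (M k l : R) * (↑(v ^ (l : ℕ)) : R))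
              * (↑(v⁻¹ ^ (j : ℕ)) : R)) * e
          = (if (i : ℕ) = (k : ℕ) then e else 0) * (M k l : R) *
            (if (l : ℕ) = (j : ℕ) then e else 0) := by
        intro k l
        have h1 : e * (M k l : R) = (M k l : R) := by
          conv_lhs => rw [← (M k l).2]
          simp only [← mul_assoc]; rw [he.eq]; exact (M k l).2
        have h2 : (M k l : R) * e = (M k l : R) := by
          conv_lhs => rw [← (M k l).2]
          rw [mul_assoc, he.eq]; exact (M k l).2
        rw [← hek _ _ i.isLt k.isLt, ← hek _ _ l.isLt j.isLt]
        simp only [← mul_assoc]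
        rw [mul_assoc (e * (↑(v ^ (i : ℕ)) : R) * (↑(v⁻¹ ^ (k : ℕ)) : R)) e (M k l : R), h1,
          mul_assoc (e * (↑(v ^ (i : ℕ)) : R) * (↑(v⁻¹ ^ (k : ℕ)) : R)) (M k l : R) e, h2]
      simp only [step, ite_mul, mul_ite, zero_mul, mul_zero]
      simp only [Fin.val_eq_val, Finset.sum_ite_eq', Finset.sum_ite_eq, Finset.mem_univ,
        if_true]
      exact (M i j).2
    map_mul' := by
      intro x y
      funext i j
      apply Subtype.ext
      show e * (_ * (x * y) * _) * e = _
      show _ = ((∑ k : Fin n, (⟨e * ((↑(v ^ (i : ℕ)) : R) * x * (↑(v⁻¹ ^ (k : ℕ)) : R)) * e,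
        mem_cornerSubring_of e he _⟩ : cornerSubring e he) *
        ⟨e * ((↑(v ^ (k : ℕ)) : R) * y * (↑(v⁻¹ ^ (j : ℕ)) : R)) * e,
        mem_cornerSubring_of e he _⟩ : cornerSubring e he) : R)
      simp only [AddSubmonoidClass.coe_finset_sum, MulMemClass.coe_mul]
      have hterm : ∀ k : Fin n,
          (e * ((↑(v ^ (i : ℕ)) : R) * x * (↑(v⁻¹ ^ (k : ℕ)) : R)) * e) *
            (e * ((↑(v ^ (k : ℕ)) : R) * y * (↑(v⁻¹ ^ (j : ℕ)) : R)) * e)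
          = (e * (↑(v ^ (i : ℕ)) : R) * x) *
            ((↑(v⁻¹ ^ (k : ℕ)) : R) * e * (↑(v ^ (k : ℕ)) : R)) *
            (y * (↑(v⁻¹ ^ (j : ℕ)) : R) * e) := by
        intro k
        simp only [← mul_assoc]
        rw [mul_assoc _ e e, he.eq]
      simp only [hterm]
      simp only [← Finset.sum_mul, ← Finset.mul_sum]
      rw [Fin.sum_univ_eq_sum_range (fun k => (↑(v⁻¹ ^ k) : R) * e * (↑(v ^ k) : R)), hsum]
      simp only [mul_one, mul_assoc]
    map_add' := by
      intro x y
      funext i j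
      apply Subtype.ext
      show e * (_ * (x + y) * _) * e = e * _ * e + e * _ * e
      simp only [mul_add, add_mul] }

end MatrixUnits

theorem stmt_17 (R : Type*) [Ring R] (n : ℕ) (hn : 2 ≤ n) (hninv : IsUnit (n : R))
    (ω : R) (hωc : ω ∈ Set.center R) (hωu : IsUnit ω) (hωn : ω ^ n = 1)
    (hdiff : ∀ i j, i < n → j < n → i ≠ j → IsUnit (ω ^ i - ω ^ j))
    (a b : R) (u : R) (hu : u = a * b - b * a) (hun : u ^ n = 1)
    (v : Rˣ) (hv : (v : R) * u * (↑v⁻¹ : R) = Ring.inverse ω * u) :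
    ∃ he0 : IsIdempotentElem (Ring.inverse (n : R) * ∑ j ∈ Finset.range n, u ^ j),
      Nonempty (R ≃+* Matrix (Fin n) (Fin n)
        (cornerSubring (Ring.inverse (n : R) * ∑ j ∈ Finset.range n, u ^ j) he0)) := by
  have hnpos : 0 < n := by omega
  set m : R := Ring.inverse (n : R) with hmdef
  set S : R := ∑ j ∈ Finset.range n, u ^ j with hSdef
  clear hu
  have hm1 : m * (n : R) = 1 := Ring.inverse_mul_cancel _ hninv
  have hm2 : (n : R) * m = 1 := Ring.mul_inverse_cancel _ hninv
  have hcomm_m : ∀ x : R, m * x = x * m := by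
    intro x
    calc m * x = m * x * ((n : R) * m) := by rw [hm2, mul_one]
    _ = m * (x * (n : R)) * m := by simp [mul_assoc]
    _ = m * ((n : R) * x) * m := by rw [(Nat.cast_commute n x).eq]
    _ = (m * (n : R)) * (x * m) := by simp [mul_assoc]
    _ = x * m := by rw [hm1, one_mul]
  have hωx : ∀ x : R, ω * x = x * ω := fun x => (Set.mem_center_iff.mp hωc).comm x
  have hωq : ∀ (q : ℕ) (x : R), ω ^ q * x = x * ω ^ q :=
    fun q x => (Commute.pow_left (hωx x) q).eq
  have hpowmod : ∀ a : ℕ, ω ^ a = ω ^ (a % n) := by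
    intro a
    conv_lhs => rw [← Nat.div_add_mod a n]
    rw [pow_add, pow_mul, hωn, one_pow, one_mul]
  have hgeom : ∀ k : ℕ, k % n ≠ 0 → ∑ j ∈ Finset.range n, (ω ^ k) ^ j = 0 := by
    intro k hk
    obtain ⟨c, hc⟩ := hdiff (k % n) 0 (Nat.mod_lt _ hnpos) hnpos hk
    have hcv : (c : R) = ω ^ k - 1 := by rw [hc, pow_zero, ← hpowmod]
    have h0 : (∑ j ∈ Finset.range n, (ω ^ k) ^ j) * (ω ^ k - 1) = 0 := by
      rw [geom_sum_mul, ← pow_mul, mul_comm k n, pow_mul, hωn, one_pow, sub_self]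
    calc (∑ j ∈ Finset.range n, (ω ^ k) ^ j)
        = (∑ j ∈ Finset.range n, (ω ^ k) ^ j) * ((ω ^ k - 1) * (↑c⁻¹ : R)) := by
          rw [← hcv, Units.mul_inv, mul_one]
    _ = ((∑ j ∈ Finset.range n, (ω ^ k) ^ j) * (ω ^ k - 1)) * (↑c⁻¹ : R) := by
          rw [mul_assoc]
    _ = 0 := by rw [h0, zero_mul]
  have hshift : ∑ j ∈ Finset.range n, u ^ (j + 1) = S := by
    have h1 := Finset.sum_range_succ' (fun j => u ^ j) n
    have h2 := Finset.sum_range_succ (fun j => u ^ j) n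
    simp only [pow_zero] at h1
    rw [h2, hun, ← hSdef] at h1
    exact add_right_cancel h1.symm
  have hSu : S * u = S := by
    rw [hSdef, Finset.sum_mul]
    calc ∑ j ∈ Finset.range n, u ^ j * u = ∑ j ∈ Finset.range n, u ^ (j + 1) :=
      Finset.sum_congr rfl fun j _ => (pow_succ u j).symm
    _ = S := hshift
  have huS : u * S = S := by
    rw [hSdef, Finset.mul_sum]
    calc ∑ j ∈ Finset.range n, u * u ^ j = ∑ j ∈ Finset.range n, u ^ (j + 1) :=
      Finset.sum_congr rfl fun j _ => (pow_succ' u j).symm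
    _ = S := hshift
  have hSpow : ∀ j : ℕ, S * u ^ j = S := by
    intro j
    induction j with
    | zero => simp
    | succ j ih => rw [pow_succ, ← mul_assoc, ih, hSu]
  have hpowS : ∀ j : ℕ, u ^ j * S = S := by
    intro j
    induction j with
    | zero => simp
    | succ j ih => rw [pow_succ', mul_assoc, ih, huS]
  have hSS : S * S = (n : R) * S := by
    conv_lhs => rw [hSdef, Finset.sum_mul]
    calc ∑ j ∈ Finset.range n, u ^ j * S = ∑ _j ∈ Finset.range n, S :=
      Finset.sum_congr rfl fun j _ => hpowS j
    _ = (n : R) * S := by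
      rw [Finset.sum_const, Finset.card_range, nsmul_eq_mul]
  have he0 : IsIdempotentElem (m * S) := by
    show (m * S) * (m * S) = m * S
    calc (m * S) * (m * S) = m * ((S * m) * S) := by simp [mul_assoc]
    _ = m * ((m * S) * S) := by rw [← hcomm_m]
    _ = m * (m * (S * S)) := by rw [mul_assoc]
    _ = m * (m * ((n : R) * S)) := by rw [hSS]
    _ = m * ((m * (n : R)) * S) := by rw [mul_assoc]
    _ = m * S := by rw [hm1, one_mul]
  set e : R := m * S with hedef
  have heu : ∀ j : ℕ, e * u ^ j = e := by
    intro j; rw [hedef, mul_assoc, hSpow]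
  -- conjugation relations
  have hωpow : ω * ω ^ (n - 1) = 1 := by
    rw [← pow_succ', Nat.sub_add_cancel (by omega : 1 ≤ n), hωn]
  have hinvω : Ring.inverse ω = ω ^ (n - 1) := by
    calc Ring.inverse ω = Ring.inverse ω * (ω * ω ^ (n - 1)) := by rw [hωpow, mul_one]
    _ = (Ring.inverse ω * ω) * ω ^ (n - 1) := by rw [mul_assoc]
    _ = ω ^ (n - 1) := by rw [Ring.inverse_mul_cancel _ hωu, one_mul]
  have hv1 : (v : R) * u = ω ^ (n - 1) * (u * (v : R)) := by
    have h := congrArg (· * (v : R)) hv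
    simp only [mul_assoc, Units.inv_mul, mul_one] at h
    rw [h, hinvω]
  have hv2 : (↑v⁻¹ : R) * u = ω * (u * (↑v⁻¹ : R)) := by
    refine (Units.mul_right_inj v).mp ?_
    calc (v : R) * ((↑v⁻¹ : R) * u) = u := by rw [← mul_assoc, Units.mul_inv, one_mul]
    _ = (ω * Ring.inverse ω) * u := by rw [Ring.mul_inverse_cancel _ hωu, one_mul]
    _ = ω * (Ring.inverse ω * u) := by rw [mul_assoc]
    _ = ω * ((v : R) * u * (↑v⁻¹ : R)) := by rw [hv]
    _ = (v : R) * (ω * (u * (↑v⁻¹ : R))) := by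
        simp only [mul_assoc]
        rw [← mul_assoc, hωx ((v : R)), mul_assoc]
  have step0 : ∀ (w : Rˣ) (c : R), (∀ x : R, c * x = x * c) → ((w : R) * u = c * (u * (w : R))) →
      ∀ j : ℕ, (w : R) * u ^ j = c ^ j * (u ^ j * (w : R)) := by
    intro w c hc hw j
    induction j with
    | zero => simp
    | succ j ih =>
      calc (w : R) * u ^ (j + 1) = ((w : R) * u ^ j) * u := by rw [pow_succ, mul_assoc]
      _ = c ^ j * (u ^ j * ((w : R) * u)) := by rw [ih]; simp [mul_assoc]
      _ = c ^ j * (u ^ j * (c * (u * (w : R)))) := by rw [hw]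
      _ = c ^ j * (c * (u ^ j * (u * (w : R)))) := by
          rw [← mul_assoc (u ^ j) c, ← hc (u ^ j), mul_assoc]
      _ = (c ^ j * c) * ((u ^ j * u) * (w : R)) := by simp [mul_assoc]
      _ = c ^ (j + 1) * (u ^ (j + 1) * (w : R)) := by rw [pow_succ, pow_succ]
  have step1 : ∀ (w : Rˣ) (c : R), (∀ x : R, c * x = x * c) → ((w : R) * u = c * (u * (w : R))) →
      ∀ k j : ℕ, (↑(w ^ k) : R) * u ^ j = c ^ (k * j) * (u ^ j * (↑(w ^ k) : R)) := by
    intro w c hc hw k j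
    have hcq : ∀ (q : ℕ) (x : R), c ^ q * x = x * c ^ q :=
      fun q x => (Commute.pow_left (hc x) q).eq
    induction k with
    | zero => simp
    | succ k ih =>
      calc (↑(w ^ (k + 1)) : R) * u ^ j = (↑(w ^ k) : R) * ((w : R) * u ^ j) := by
            rw [pow_succ, Units.val_mul, mul_assoc]
      _ = (↑(w ^ k) : R) * (c ^ j * (u ^ j * (w : R))) := by rw [step0 w c hc hw j]
      _ = c ^ j * ((↑(w ^ k) : R) * (u ^ j * (w : R))) := by
          rw [← mul_assoc, ← hcq j, mul_assoc]
      _ = c ^ j * ((c ^ (k * j) * (u ^ j * (↑(w ^ k) : R))) * (w : R)) := by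
          rw [← mul_assoc (↑(w ^ k) : R), ih]
      _ = (c ^ j * c ^ (k * j)) * (u ^ j * ((↑(w ^ k) : R) * (w : R))) := by
          simp [mul_assoc]
      _ = c ^ ((k + 1) * j) * (u ^ j * (↑(w ^ (k + 1)) : R)) := by
          rw [← pow_add, pow_succ, Units.val_mul]
          ring_nf
  have hkey : ∀ (w : Rˣ) (c : R), (∀ x : R, c * x = x * c) → ((w : R) * u = c * (u * (w : R))) →
      ∀ k : ℕ, (↑(w ^ k) : R) * e
        = (m * ∑ j ∈ Finset.range n, c ^ (k * j) * u ^ j) * (↑(w ^ k) : R) := by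
    intro w c hc hw k
    calc (↑(w ^ k) : R) * e = m * ((↑(w ^ k) : R) * S) := by
          rw [hedef, ← mul_assoc, ← hcomm_m, mul_assoc]
    _ = m * ∑ j ∈ Finset.range n, c ^ (k * j) * (u ^ j * (↑(w ^ k) : R)) := by
          rw [hSdef, Finset.mul_sum]
          exact congrArg _ (Finset.sum_congr rfl fun j _ => step1 w c hc hw k j)
    _ = (m * ∑ j ∈ Finset.range n, c ^ (k * j) * u ^ j) * (↑(w ^ k) : R) := by
          rw [mul_assoc, Finset.sum_mul]
          simp [mul_assoc]
  have horthgen : ∀ (w : Rˣ) (c : R), (∀ x : R, c * x = x * c) →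
      ((w : R) * u = c * (u * (w : R))) →
      ∀ k : ℕ, (∑ j ∈ Finset.range n, c ^ (k * j)) = 0 → e * (↑(w ^ k) : R) * e = 0 := by
    intro w c hc hw k hz
    have hcq : ∀ (q : ℕ) (x : R), c ^ q * x = x * c ^ q :=
      fun q x => (Commute.pow_left (hc x) q).eq
    have hzero : e * (m * ∑ j ∈ Finset.range n, c ^ (k * j) * u ^ j) = 0 := by
      calc e * (m * ∑ j ∈ Finset.range n, c ^ (k * j) * u ^ j)
          = m * (e * ∑ j ∈ Finset.range n, c ^ (k * j) * u ^ j) := by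
            rw [← mul_assoc, ← hcomm_m e, mul_assoc]
      _ = m * ∑ j ∈ Finset.range n, c ^ (k * j) * (e * u ^ j) := by
            rw [Finset.mul_sum]
            refine congrArg _ (Finset.sum_congr rfl fun j _ => ?_)
            rw [← mul_assoc, ← hcq (k * j) e, mul_assoc]
      _ = m * ∑ j ∈ Finset.range n, c ^ (k * j) * e := by
            simp only [heu]
      _ = m * ((∑ j ∈ Finset.range n, c ^ (k * j)) * e) := by rw [Finset.sum_mul]
      _ = 0 := by rw [hz, zero_mul, mul_zero]
    rw [mul_assoc, hkey w c hc hw k, ← mul_assoc, hzero, zero_mul]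
  -- orthogonality hypotheses
  have horthp : ∀ k, 0 < k → k < n → e * (↑(v ^ k) : R) * e = 0 := by
    intro k hk0 hkn
    refine horthgen v (ω ^ (n - 1)) (fun x => hωq (n - 1) x) hv1 k ?_
    have hmod : ((n - 1) * k) % n ≠ 0 := by
      intro h
      have hd : n ∣ (n - 1) * k := Nat.dvd_of_mod_eq_zero h
      have hd2 : n ∣ n * k := dvd_mul_right n k
      have hsub : n * k - (n - 1) * k = k := by
        rw [← Nat.sub_mul, (by omega : n - (n - 1) = 1), one_mul]
      have hdk : n ∣ k := by
        have := Nat.dvd_sub hd2 hd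
        rwa [hsub] at this
      have := Nat.le_of_dvd hk0 hdk
      omega
    calc ∑ j ∈ Finset.range n, (ω ^ (n - 1)) ^ (k * j)
        = ∑ j ∈ Finset.range n, (ω ^ ((n - 1) * k)) ^ j := by
          refine Finset.sum_congr rfl fun j _ => ?_
          rw [← pow_mul, ← pow_mul, Nat.mul_assoc]
    _ = 0 := hgeom _ hmod
  have horthm : ∀ k, 0 < k → k < n → e * (↑(v⁻¹ ^ k) : R) * e = 0 := by
    intro k hk0 hkn
    refine horthgen v⁻¹ ω hωx hv2 k ?_
    calc ∑ j ∈ Finset.range n, ω ^ (k * j)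
        = ∑ j ∈ Finset.range n, (ω ^ k) ^ j := by
          refine Finset.sum_congr rfl fun j _ => ?_
          rw [← pow_mul]
    _ = 0 := by
      refine hgeom k ?_
      rw [Nat.mod_eq_of_lt hkn]
      omega
  -- completeness (sum of the conjugate idempotents is 1)
  have hsum : ∑ k ∈ Finset.range n, (↑(v⁻¹ ^ k) : R) * e * (↑(v ^ k) : R) = 1 := by
    have hterm : ∀ k ∈ Finset.range n,
        (↑(v⁻¹ ^ k) : R) * e * (↑(v ^ k) : R)
          = m * ∑ j ∈ Finset.range n, ω ^ (k * j) * u ^ j := by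
      intro k _
      rw [hkey v⁻¹ ω hωx hv2 k, mul_assoc, ← Units.val_mul, inv_pow, inv_mul_cancel,
        Units.val_one, mul_one]
    rw [Finset.sum_congr rfl hterm, ← Finset.mul_sum]
    have hswap : ∑ k ∈ Finset.range n, ∑ j ∈ Finset.range n, ω ^ (k * j) * u ^ j
        = ∑ j ∈ Finset.range n, (∑ k ∈ Finset.range n, ω ^ (k * j)) * u ^ j := by
      rw [Finset.sum_comm]
      exact Finset.sum_congr rfl fun j _ => (Finset.sum_mul _ _ _).symm
    rw [hswap]
    have hj : ∀ j ∈ Finset.range n,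
        (∑ k ∈ Finset.range n, ω ^ (k * j)) * u ^ j = if j = 0 then (n : R) else 0 := by
      intro j hjmem
      by_cases h0 : j = 0
      · subst h0
        simp [Finset.sum_const, Finset.card_range, nsmul_eq_mul]
      · rw [if_neg h0]
        have hz : ∑ k ∈ Finset.range n, ω ^ (k * j) = 0 := by
          calc ∑ k ∈ Finset.range n, ω ^ (k * j)
              = ∑ k ∈ Finset.range n, (ω ^ j) ^ k := by
                refine Finset.sum_congr rfl fun k _ => ?_
                rw [← pow_mul, Nat.mul_comm]
          _ = 0 := by
            refine hgeom j ?_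
            rw [Nat.mod_eq_of_lt (Finset.mem_range.mp hjmem)]
            exact h0
        rw [hz, zero_mul]
    rw [Finset.sum_congr rfl hj, Finset.sum_ite_eq' (Finset.range n) 0 (fun _ => (n : R))]
    rw [if_pos (Finset.mem_range.mpr hnpos), hm1]
  exact ⟨he0, ⟨matrixUnitsEquiv n e he0 v hsum horthp horthm⟩⟩
end
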